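/- Let ε ∈ ℝ and let u : ℝ → ℝ be differentiable and satisfy the logistic equation u'(t) = u(t)·(1 − u(t)) for all t in an open interval J, and suppose 1 + ε·u(t)·e^{−t} ≠ 0 on J. Then the function U(t) = u(t)/(1 + ε·u(t)·e^{−t}) is differentiable and satisfies U'(t) = U(t)·(1 − U(t)) on J. (The logistic equation admits the one-parameter symmetry group T = t, U = u/(1 + ε u e^{−t}).) -/

import Mathlib

/-- The logistic equation admits the one-parameter symmetry group
`T = t`, `U = u/(1 + ε u e^{−t})`. -/
theorem logistic_symmetry
    (ε a b : ℝ) (u U : ℝ → ℝ)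
    (hu : ∀ t ∈ Set.Ioo a b, HasDerivAt u (u t * (1 - u t)) t)
    (hden : ∀ t ∈ Set.Ioo a b, 1 + ε * u t * Real.exp (-t) ≠ 0)
    (hU : ∀ t, U t = u t / (1 + ε * u t * Real.exp (-t))) :
    ∀ t ∈ Set.Ioo a b, HasDerivAt U (U t * (1 - U t)) t := by
  have hUeq : U = fun s => u s / (1 + ε * u s * Real.exp (-s)) := funext hU
  intro t ht
  have hd := hden t ht
  have hu' := hu t ht
  have hexp : HasDerivAt (fun s : ℝ => Real.exp (-s)) (Real.exp (-t) * (-1)) t :=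
    (hasDerivAt_neg t).exp
  have hden' : HasDerivAt (fun s => 1 + ε * u s * Real.exp (-s))
      ((ε * (u t * (1 - u t))) * Real.exp (-t) + (ε * u t) * (Real.exp (-t) * (-1))) t :=
    (((hu'.const_mul ε).mul hexp)).const_add 1
  have h : HasDerivAt (fun s => u s / (1 + ε * u s * Real.exp (-s))) _ t := hu'.div hden' hd
  rw [hUeq]
  convert h using 1
  beta_reduce
  field_simp [show 1 + u t * ε * Real.exp (-t) ≠ 0 by rwa [mul_comm (u t) ε]]
  ring
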